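/- Let G be a finite abelian group and let W be a uniform random variable on a finite set S. Suppose f₀,...,f_{m-1} : S → G are functions such that the random variables f₀(W),...,f_{m-1}(W) are mutually independent and each f_i either induces the uniform distribution on G or is constant. If at most one of the f_i is constant, then |S| ≥ |G|^{m-1}. (This is the counting core of the minimum-message-size converse: the message size must be at least (N-1)·log|Y|.) -/

import Mathlib

/-- Counting core of the minimum-message-size converse: if `f₀, ..., f_{m-1} : S → G` are
mutually independent under the uniform distribution on `S`, each either uniform on the
finite abelian group `G` or constant, and at most one is constant, then
`|S| ≥ |G|^(m-1)`. -/
theorem min_message_size_counting (G : Type*) [AddCommGroup G] [Fintype G] [DecidableEq G]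
    (S : Type*) [Fintype S] [DecidableEq S] [Nonempty S]
    (m : ℕ) (f : Fin m → S → G)
    (hindep : ∀ x : Fin m → G,
      (Fintype.card {s : S // ∀ i, f i s = x i} : ℚ) * (Fintype.card S : ℚ) ^ (m - 1) =
        ∏ i : Fin m, (Fintype.card {s : S // f i s = x i} : ℚ))
    (hunif : ∀ i : Fin m,
      (∀ g g' : G, Fintype.card {s : S // f i s = g} = Fintype.card {s : S // f i s = g'}) ∨
      (∃ c : G, ∀ s : S, f i s = c))
    (hone : ∀ i j : Fin m, i ≠ j →
      ¬((∃ c : G, ∀ s : S, f i s = c) ∧ (∃ c : G, ∀ s : S, f j s = c))) :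
    Fintype.card G ^ (m - 1) ≤ Fintype.card S := by
  classical
  rcases Nat.eq_zero_or_pos m with hm | hm
  · subst hm; simp; exact Fintype.card_pos
  obtain ⟨s₀⟩ := ‹Nonempty S›
  set x : Fin m → G := fun i => f i s₀ with hx
  set sQ : ℚ := (Fintype.card S : ℚ) with hsQ
  set gQ : ℚ := (Fintype.card G : ℚ) with hgQ
  have hs0 : 0 < sQ := by
    show (0 : ℚ) < (Fintype.card S : ℚ); exact_mod_cast Fintype.card_pos
  have hg0 : 0 < gQ := by
    show (0 : ℚ) < (Fintype.card G : ℚ); exact_mod_cast Fintype.card_pos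
  have hg1 : 1 ≤ gQ := by
    show (1 : ℚ) ≤ (Fintype.card G : ℚ); exact_mod_cast Fintype.card_pos (α := G)
  set c : Fin m → ℚ := fun i => (Fintype.card {s : S // f i s = x i} : ℚ) with hc
  -- uniform fibers have size |S|/|G|
  have hfiber : ∀ i : Fin m,
      (∀ g g' : G, Fintype.card {s : S // f i s = g} = Fintype.card {s : S // f i s = g'}) →
      c i * gQ = sQ := by
    intro i hu
    have hsum : ∑ y' : G, (Finset.univ.filter fun s => f i s = y').card = Fintype.card S :=
      (Finset.card_eq_sum_card_fiberwise (fun s _ => Finset.mem_univ (f i s))).symm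
    have heach : ∀ y' : G, (Finset.univ.filter fun s => f i s = y').card
        = Fintype.card {s : S // f i s = x i} := by
      intro y'
      rw [← Fintype.card_subtype]
      exact hu y' (x i)
    rw [Finset.sum_congr rfl fun y' _ => heach y'] at hsum
    rw [Finset.sum_const, smul_eq_mul, Finset.card_univ] at hsum
    have h2 : (Fintype.card G : ℚ) * (Fintype.card {s : S // f i s = x i} : ℚ)
        = (Fintype.card S : ℚ) := by exact_mod_cast congrArg (fun n : ℕ => (n : ℚ)) hsum
    show (Fintype.card {s : S // f i s = x i} : ℚ) * gQ = sQ
    show (Fintype.card {s : S // f i s = x i} : ℚ) * (Fintype.card G : ℚ)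
        = (Fintype.card S : ℚ)
    linarith [h2]
  -- constant fibers are all of S
  have hconstfiber : ∀ i : Fin m, (∃ c0 : G, ∀ s : S, f i s = c0) → c i = sQ := by
    intro i ⟨c0, hc0⟩
    have : ∀ s : S, f i s = x i := by intro s; rw [hc0 s, hx]; simp [hc0 s₀]
    have hcard : Fintype.card {s : S // f i s = x i} = Fintype.card S :=
      Fintype.card_congr (Equiv.subtypeUnivEquiv this)
    show (Fintype.card {s : S // f i s = x i} : ℚ) = sQ
    rw [hcard]
  -- each factor (c i * gQ) equals sQ, except possibly one which equals sQ * gQ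
  have key : ∏ i : Fin m, (c i * gQ) ≤ sQ ^ m * gQ := by
    by_cases hex : ∃ i₀ : Fin m, ∃ c0 : G, ∀ s : S, f i₀ s = c0
    · obtain ⟨i₀, hi₀⟩ := hex
      have hrest : ∀ j : Fin m, j ≠ i₀ → c j * gQ = sQ := by
        intro j hj
        rcases hunif j with hu | hcst
        · exact hfiber j hu
        · exact absurd ⟨hcst, hi₀⟩ (hone j i₀ hj)
      rw [← Finset.mul_prod_erase Finset.univ _ (Finset.mem_univ i₀)]
      have hprod : ∏ j ∈ Finset.univ.erase i₀, (c j * gQ) = sQ ^ (m - 1) := by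
        rw [Finset.prod_congr rfl fun j hj => hrest j (Finset.mem_erase.mp hj).1,
          Finset.prod_const, Finset.card_erase_of_mem (Finset.mem_univ i₀),
          Finset.card_univ, Fintype.card_fin]
      rw [hprod, hconstfiber i₀ hi₀]
      have hsm : sQ ^ m = sQ ^ (m - 1) * sQ := by
        conv_lhs => rw [show m = (m - 1) + 1 from (Nat.succ_pred_eq_of_pos hm).symm]
        rw [pow_succ]
      rw [hsm]; ring_nf; exact le_refl _
    · push_neg at hex
      have hall : ∀ i : Fin m, c i * gQ = sQ := by
        intro i
        rcases hunif i with hu | hcst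
        · exact hfiber i hu
        · obtain ⟨c0, hc0⟩ := hcst
          obtain ⟨s, hs⟩ := hex i c0
          exact absurd (hc0 s) hs
      rw [Finset.prod_congr rfl fun i _ => hall i, Finset.prod_const, Finset.card_univ,
        Fintype.card_fin]
      nlinarith [mul_le_mul_of_nonneg_left hg1 (pow_pos hs0 m).le]
  -- the joint fiber at x is nonempty
  have hJ : (1 : ℚ) ≤ (Fintype.card {s : S // ∀ i, f i s = x i} : ℚ) := by
    haveI : Nonempty {s : S // ∀ i, f i s = x i} := ⟨⟨s₀, fun i => rfl⟩⟩
    exact_mod_cast Fintype.card_pos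
  -- combine
  have hprodsplit : ∏ i : Fin m, (c i * gQ) = (∏ i : Fin m, c i) * gQ ^ m := by
    rw [Finset.prod_mul_distrib, Finset.prod_const, Finset.card_univ, Fintype.card_fin]
  have hind := hindep x
  have hindQ : (Fintype.card {s : S // ∀ i, f i s = x i} : ℚ) * sQ ^ (m - 1)
      = ∏ i : Fin m, c i := hind
  have hpowpos : 0 < sQ ^ (m - 1) := pow_pos hs0 _
  have h1 : sQ ^ (m - 1) * gQ ^ m ≤ sQ ^ m * gQ := by
    calc sQ ^ (m - 1) * gQ ^ m
        ≤ ((Fintype.card {s : S // ∀ i, f i s = x i} : ℚ) * sQ ^ (m - 1)) * gQ ^ m := by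
          have hgm : 0 < gQ ^ m := pow_pos hg0 m
          have hh := mul_le_mul_of_nonneg_right
            (mul_le_mul_of_nonneg_right hJ hpowpos.le) hgm.le
          linarith [hh]
      _ = (∏ i : Fin m, c i) * gQ ^ m := by rw [hindQ]
      _ = ∏ i : Fin m, (c i * gQ) := hprodsplit.symm
      _ ≤ sQ ^ m * gQ := key
  have h2 : sQ ^ (m - 1) * (gQ ^ (m - 1) * gQ) ≤ sQ ^ (m - 1) * (sQ * gQ) := by
    have hm' : m = (m - 1) + 1 := (Nat.succ_pred_eq_of_pos hm).symm
    have hsm : sQ ^ m = sQ ^ (m - 1) * sQ := by conv_lhs => rw [hm', pow_succ]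
    have hgm : gQ ^ m = gQ ^ (m - 1) * gQ := by conv_lhs => rw [hm', pow_succ]
    calc sQ ^ (m - 1) * (gQ ^ (m - 1) * gQ) = sQ ^ (m - 1) * gQ ^ m := by rw [hgm]
      _ ≤ sQ ^ m * gQ := h1
      _ = sQ ^ (m - 1) * (sQ * gQ) := by rw [hsm]; ring
  have h3 : gQ ^ (m - 1) * gQ ≤ sQ * gQ := le_of_mul_le_mul_left h2 hpowpos
  have h4 : gQ ^ (m - 1) ≤ sQ := le_of_mul_le_mul_right h3 hg0
  have h5 : ((Fintype.card G : ℚ)) ^ (m - 1) ≤ (Fintype.card S : ℚ) := h4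
  exact_mod_cast h5
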